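/- There exists an integer d₀ > 0 such that for every ε > 0 and integer d₀ ≤ d ≤ n−1 the following holds: if G is an (n,d,λ)-graph in which every subset U of vertices with |U| ≤ d + d²/ε spans at most |U| edges, then for every subgraph H ⊆ G with Δ(H) ≤ (d−λ)/2 − ε, the graph G − H is (d − Δ(H))-vertex-connected. -/

import Mathlib

open SimpleGraph Real
open scoped Classical

variable {V : Type*}

noncomputable def degN (H : SimpleGraph V) (v : V) : ℕ := (H.neighborSet v).ncard

noncomputable def maxDeg (H : SimpleGraph V) : ℕ := sSup (Set.range (degN H))

noncomputable def minDeg (H : SimpleGraph V) : ℕ := sInf (Set.range (degN H))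

noncomputable def localResilience [Fintype V] (G : SimpleGraph V)
    (P : SimpleGraph V → Prop) : ℕ :=
  sInf {r | ∃ H ≤ G, maxDeg H = r ∧ ¬ P (G \ H)}

def EdgeConnK [Fintype V] (G : SimpleGraph V) (k : ℕ) : Prop :=
  ∀ s : Finset (Sym2 V), s.card < k → (G.deleteEdges ↑s).Connected

def VertConnK [Fintype V] (G : SimpleGraph V) (k : ℕ) : Prop :=
  ∀ S : Finset V, S.card < k → (G.induce ((↑S : Set V)ᶜ)).Connected

def IsReg (G : SimpleGraph V) (d : ℕ) : Prop := ∀ v, degN G v = d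

noncomputable def quadForm [Fintype V] (G : SimpleGraph V) (x : V → ℝ) : ℝ :=
  ∑ u, ∑ v, if G.Adj u v then x u * x v else 0

/-- `(n,d,lam)`-graph: `d`-regular and all eigenvalues of the adjacency matrix other
than the top one (i.e. on the orthogonal complement of the all-ones vector) are at
most `lam` in absolute value. -/
def IsNDL [Fintype V] (G : SimpleGraph V) (d : ℕ) (lam : ℝ) : Prop :=
  IsReg G d ∧ ∀ x : V → ℝ, (∑ v, x v) = 0 → |quadForm G x| ≤ lam * ∑ v, (x v) ^ 2

noncomputable def edgesWithin (G : SimpleGraph V) (U : Set V) : ℕ :=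
  {e ∈ G.edgeSet | ∀ v ∈ e, v ∈ U}.ncard

noncomputable def edgesBetween (G : SimpleGraph V) (U W : Set V) : ℕ :=
  {p : V × V | p.1 ∈ U ∧ p.2 ∈ W ∧ G.Adj p.1 p.2}.ncard

def nbhd (G : SimpleGraph V) (S : Set V) : Set V :=
  {v | v ∉ S ∧ ∃ u ∈ S, G.Adj u v}

noncomputable def maxPathLength (G : SimpleGraph V) : ℕ :=
  sSup {n | ∃ (u v : V) (p : G.Walk u v), p.IsPath ∧ p.length = n}

def Booster [Fintype V] (G : SimpleGraph V) (u v : V) : Prop :=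
  u ≠ v ∧ ¬ G.Adj u v ∧
    ((G ⊔ fromEdgeSet {s(u, v)}).IsHamiltonian ∨
      maxPathLength G < maxPathLength (G ⊔ fromEdgeSet {s(u, v)}))

def BSet [Fintype V] (G : SimpleGraph V) (v : V) : Set V := {w | Booster G v w}

def boosterSet [Fintype V] (G : SimpleGraph V) : Set (Sym2 V) :=
  {e | ∃ u v, e = s(u, v) ∧ Booster G u v}

def IsExpander [Fintype V] (G : SimpleGraph V) (ε : ℝ) : Prop :=
  (∀ S : Set V, (S.ncard : ℝ) < ε * (Fintype.card V) →
      10 * S.ncard ≤ (nbhd G S).ncard) ∧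
  (∀ S : Set V, ε * (Fintype.card V) ≤ (S.ncard : ℝ) →
      (S.ncard : ℝ) ≤ 2 * ε * (Fintype.card V) →
      (1 + 12 * ε) * (Fintype.card V) / 2 ≤ ((nbhd G S).ncard : ℝ))

def IsMagnifier (G : SimpleGraph V) (k ℓ : ℝ) : Prop :=
  ∀ U : Set V, (U.ncard : ℝ) ≤ k → ℓ * U.ncard ≤ ((nbhd G U).ncard : ℝ)

def QuasiRandom [Fintype V] (G : SimpleGraph V) (d : ℕ) (ε : ℝ) : Prop :=
  ((d : ℝ) / 2 ≤ (minDeg G : ℝ) ∧ (maxDeg G : ℝ) ≤ 2 * d) ∧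
  (∀ U : Set V, (U.ncard : ℝ) < ε ^ 3 * (Fintype.card V) / 14 →
      (edgesWithin G U : ℝ) ≤ ε ^ 3 * d * U.ncard / 14) ∧
  (∀ U W : Set V, Disjoint U W →
      ε ^ 3 / 160 * (Fintype.card V) ≤ (U.ncard : ℝ) →
      (U.ncard : ℝ) < 2 * (ε ^ 3 / 160) * (Fintype.card V) →
      (Fintype.card V : ℝ) / 2 * (1 - ε / 2 - 4 * (ε ^ 3 / 160)) ≤ (W.ncard : ℝ) →
      (d : ℝ) * (1 - ε / 4) / (Fintype.card V) * (U.ncard * W.ncard)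
          - (1 - ε) * (d : ℝ) / 2 * U.ncard ≤ (edgesBetween G U W : ℝ))

def bipartiteBetween (G : SimpleGraph V) (S : Set V) : SimpleGraph V where
  Adj u v := G.Adj u v ∧ ((u ∈ S ∧ v ∉ S) ∨ (u ∉ S ∧ v ∈ S))
  symm := by
    constructor
    intro u v h
    exact ⟨h.1.symm, h.2.elim (fun hh => Or.inr ⟨hh.2, hh.1⟩) (fun hh => Or.inl ⟨hh.2, hh.1⟩)⟩
  loopless := by
    constructor
    intro v h
    exact G.irrefl h.1

def LegalStrategy [Fintype V] (G : SimpleGraph V)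
    (σ : Finset (Sym2 V) × Finset (Sym2 V) → Sym2 V) : Prop :=
  ∀ s : Finset (Sym2 V) × Finset (Sym2 V),
    (∃ e ∈ G.edgeSet, e ∉ s.1 ∧ e ∉ s.2) →
    σ s ∈ G.edgeSet ∧ σ s ∉ s.1 ∧ σ s ∉ s.2

def playMB [DecidableEq V]
    (σ τ : Finset (Sym2 V) × Finset (Sym2 V) → Sym2 V) :
    ℕ → Finset (Sym2 V) × Finset (Sym2 V)
  | 0 => (∅, ∅)
  | n + 1 =>
      let p := playMB σ τ n
      let q : Finset (Sym2 V) × Finset (Sym2 V) := (p.1, insert (τ p) p.2)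
      (insert (σ q) q.1, q.2)


noncomputable def bil [Fintype V] (G : SimpleGraph V) (f g : V → ℝ) : ℝ :=
  ∑ u, ∑ v, if G.Adj u v then f u * g v else 0

lemma bil_symm [Fintype V] (G : SimpleGraph V) (f g : V → ℝ) : bil G f g = bil G g f := by
  rw [bil, bil, Finset.sum_comm]
  refine Finset.sum_congr rfl fun u _ => Finset.sum_congr rfl fun v _ => ?_
  by_cases h : G.Adj v u
  · simp [h, h.symm, mul_comm]
  · have h' : ¬ G.Adj u v := fun h' => h h'.symm
    simp [h, h']

lemma quad_comb [Fintype V] (G : SimpleGraph V) (x y : V → ℝ) (a b : ℝ) :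
    quadForm G (fun v => a * x v + b * y v) =
      a ^ 2 * bil G x x + 2 * a * b * bil G x y + b ^ 2 * bil G y y := by
  have key : ∀ u v : V, (if G.Adj u v then (a * x u + b * y u) * (a * x v + b * y v) else 0) =
      a ^ 2 * (if G.Adj u v then x u * x v else 0) + a * b * (if G.Adj u v then x u * y v else 0)
      + a * b * (if G.Adj u v then y u * x v else 0)
      + b ^ 2 * (if G.Adj u v then y u * y v else 0) := by
    intro u v; split <;> ring
  have hyx := bil_symm G y x
  simp only [bil] at hyx
  simp only [quadForm, key, Finset.sum_add_distrib, ← Finset.mul_sum, hyx, bil]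
  ring

lemma sum_sq_eq_zero_iff' [Fintype V] (x : V → ℝ) (h : ∑ v, x v ^ 2 = 0) : ∀ v, x v = 0 := by
  intro v
  have := (Finset.sum_eq_zero_iff_of_nonneg (fun i _ => sq_nonneg (x i))).1 h v (Finset.mem_univ v)
  exact pow_eq_zero_iff (by norm_num) |>.1 this

/-- Cauchy-Schwarz for the adjacency bilinear form from the quadratic bound. -/
lemma bil_cs [Fintype V] (G : SimpleGraph V) {lam : ℝ}
    (hG : ∀ x : V → ℝ, (∑ v, x v) = 0 → |quadForm G x| ≤ lam * ∑ v, x v ^ 2)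
    (x y : V → ℝ) (hx : ∑ v, x v = 0) (hy : ∑ v, y v = 0) :
    |bil G x y| ≤ lam * Real.sqrt (∑ v, x v ^ 2) * Real.sqrt (∑ v, y v ^ 2) := by
  by_cases hpx : ∑ v, x v ^ 2 = 0
  · have hz : ∀ v, x v = 0 := sum_sq_eq_zero_iff' x hpx
    have : bil G x y = 0 := by
      rw [bil]; refine Finset.sum_eq_zero fun u _ => Finset.sum_eq_zero fun v _ => ?_
      simp [hz u]
    rw [this, hpx]; simp
  by_cases hpy : ∑ v, y v ^ 2 = 0
  · have hz : ∀ v, y v = 0 := sum_sq_eq_zero_iff' y hpy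
    have : bil G x y = 0 := by
      rw [bil]; refine Finset.sum_eq_zero fun u _ => Finset.sum_eq_zero fun v _ => ?_
      simp [hz v]
    rw [this, hpy]; simp
  set p := Real.sqrt (∑ v, x v ^ 2) with hp
  set q := Real.sqrt (∑ v, y v ^ 2) with hq
  have hxnn : (0:ℝ) ≤ ∑ v, x v ^ 2 := Finset.sum_nonneg fun i _ => sq_nonneg _
  have hynn : (0:ℝ) ≤ ∑ v, y v ^ 2 := Finset.sum_nonneg fun i _ => sq_nonneg _
  have hp2 : p ^ 2 = ∑ v, x v ^ 2 := Real.sq_sqrt hxnn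
  have hq2 : q ^ 2 = ∑ v, y v ^ 2 := Real.sq_sqrt hynn
  have hppos : 0 < p := Real.sqrt_pos.2 (lt_of_le_of_ne hxnn (Ne.symm hpx))
  have hqpos : 0 < q := Real.sqrt_pos.2 (lt_of_le_of_ne hynn (Ne.symm hpy))
  have hsu : ∑ v, (q * x v + p * y v) = 0 := by
    simp only [Finset.sum_add_distrib, ← Finset.mul_sum, hx, hy]; ring
  have hsw : ∑ v, (q * x v + (-p) * y v) = 0 := by
    simp only [Finset.sum_add_distrib, ← Finset.mul_sum, hx, hy]; ring
  have hQu := hG _ hsu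
  have hQw := hG _ hsw
  have hqu : quadForm G (fun v => q * x v + p * y v)
      = q^2 * bil G x x + 2*q*p*bil G x y + p^2 * bil G y y := quad_comb G x y q p
  have hqw : quadForm G (fun v => q * x v + (-p) * y v)
      = q^2 * bil G x x + 2*q*(-p)*bil G x y + (-p)^2 * bil G y y := quad_comb G x y q (-p)
  have expand1 : ∀ v, (q * x v + p * y v) ^ 2
      = q^2 * x v^2 + 2*q*p*(x v * y v) + p^2 * y v^2 := fun v => by ring
  have expand2 : ∀ v, (q * x v + (-p) * y v) ^ 2
      = q^2 * x v^2 + (-(2*q*p))*(x v * y v) + p^2 * y v^2 := fun v => by ring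
  have hsumu : ∑ v, (q * x v + p * y v) ^ 2
      = q^2 * (∑ v, x v ^2) + 2*q*p*(∑ v, x v * y v) + p^2 * (∑ v, y v ^2) := by
    simp only [expand1, Finset.sum_add_distrib, ← Finset.mul_sum]
  have hsumw : ∑ v, (q * x v + (-p) * y v) ^ 2
      = q^2 * (∑ v, x v ^2) + (-(2*q*p))*(∑ v, x v * y v) + p^2 * (∑ v, y v ^2) := by
    simp only [expand2, Finset.sum_add_distrib, ← Finset.mul_sum]
  have habs : 4*q*p*|bil G x y| ≤ lam * (4 * p^2 * q^2) := by
    have h1 : quadForm G (fun v => q * x v + p * y v)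
        - quadForm G (fun v => q * x v + (-p) * y v) = 4*q*p*bil G x y := by
      rw [hqu, hqw]; ring
    calc 4*q*p*|bil G x y| = |4*q*p*bil G x y| := by
          rw [abs_mul]
          rw [abs_of_pos (by positivity : (0:ℝ) < 4*q*p)]
      _ = |quadForm G (fun v => q * x v + p * y v)
            - quadForm G (fun v => q * x v + (-p) * y v)| := by rw [h1]
      _ ≤ |quadForm G (fun v => q * x v + p * y v)|
            + |quadForm G (fun v => q * x v + (-p) * y v)| := abs_sub _ _
      _ ≤ lam * (∑ v, (q * x v + p * y v) ^ 2) + lam * (∑ v, (q * x v + (-p) * y v)^2) :=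
          add_le_add hQu hQw
      _ = lam * (4 * p^2 * q^2) := by
          rw [hsumu, hsumw, ← hp2, ← hq2]; ring
  have : |bil G x y| ≤ lam * p * q := by
    nlinarith [habs, mul_pos hqpos hppos]
  exact this

lemma degN_eq [Fintype V] (G : SimpleGraph V) (v : V) : degN G v = G.degree v := by
  rw [degN, ← SimpleGraph.card_neighborFinset_eq_degree, Set.ncard_eq_toFinset_card',
    SimpleGraph.neighborFinset]

lemma rowsum_eq [Fintype V] (G : SimpleGraph V) (u : V) :
    (∑ v, if G.Adj u v then (1:ℝ) else 0) = degN G u := by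
  rw [Finset.sum_boole, degN_eq, ← SimpleGraph.card_neighborFinset_eq_degree,
    SimpleGraph.neighborFinset_eq_filter]

def onSet (G : SimpleGraph V) (U : Set V) : SimpleGraph V where
  Adj u v := G.Adj u v ∧ u ∈ U ∧ v ∈ U
  symm := ⟨fun u v h => ⟨h.1.symm, h.2.2, h.2.1⟩⟩
  loopless := ⟨fun v h => G.irrefl h.1⟩

lemma edgesWithin_eq [Fintype V] (G : SimpleGraph V) (U : Set V) :
    edgesWithin G U = (onSet G U).edgeFinset.card := by
  rw [edgesWithin]
  have hset : {e ∈ G.edgeSet | ∀ v ∈ e, v ∈ U} = (onSet G U).edgeSet := by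
    ext e
    refine Sym2.ind (fun x y => ?_) e
    simp only [Set.mem_setOf_eq, SimpleGraph.mem_edgeSet, Sym2.mem_iff, onSet]
    constructor
    · rintro ⟨h, hall⟩; exact ⟨h, hall x (Or.inl rfl), hall y (Or.inr rfl)⟩
    · rintro ⟨h, hx, hy⟩; exact ⟨h, fun v hv => hv.elim (fun e => e ▸ hx) (fun e => e ▸ hy)⟩
  rw [hset, Set.ncard_eq_toFinset_card', SimpleGraph.edgeFinset]

lemma e2_handshake [Fintype V] (G : SimpleGraph V) (U : Set V) :
    (∑ u, ∑ v, if G.Adj u v ∧ u ∈ U ∧ v ∈ U then (1:ℝ) else 0) = 2 * edgesWithin G U := by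
  have h1 : ∀ u, (∑ v, if G.Adj u v ∧ u ∈ U ∧ v ∈ U then (1:ℝ) else 0)
      = ((onSet G U).degree u : ℝ) := by
    intro u
    have h := rowsum_eq (onSet G U) u
    rw [degN_eq] at h
    rw [← h]
    exact Finset.sum_congr rfl fun v _ => if_congr Iff.rfl rfl rfl
  simp only [h1]
  rw [edgesWithin_eq, ← Nat.cast_sum, SimpleGraph.sum_degrees_eq_twice_card_edges]
  push_cast; ring

lemma colsum_eq [Fintype V] (G : SimpleGraph V) (v : V) :
    (∑ u, if G.Adj u v then (1:ℝ) else 0) = degN G v := by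
  rw [← rowsum_eq]
  exact Finset.sum_congr rfl fun u _ => if_congr (G.adj_comm u v) rfl rfl

lemma ind_sum [Fintype V] (A : Set V) : (∑ v, if v ∈ A then (1:ℝ) else 0) = A.ncard := by
  rw [Finset.sum_boole, Set.ncard_eq_toFinset_card', Set.filter_mem_univ_eq_toFinset]

lemma ind_centered_sum [Fintype V] (A : Set V) :
    (∑ v, ((if v ∈ A then (1:ℝ) else 0) - A.ncard / Fintype.card V)) = 0 := by
  rcases Nat.eq_zero_or_pos (Fintype.card V) with h | h
  · have : (Finset.univ : Finset V) = ∅ := Finset.card_eq_zero.1 (by simpa using h)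
    simp [this]
  rw [Finset.sum_sub_distrib, ind_sum, Finset.sum_const]
  have hn : (Fintype.card V : ℝ) ≠ 0 := by positivity
  simp only [Finset.card_univ, nsmul_eq_mul]
  field_simp
  ring

lemma ind_centered_sq [Fintype V] (A : Set V) (hn : 0 < Fintype.card V) :
    (∑ v, ((if v ∈ A then (1:ℝ) else 0) - A.ncard / Fintype.card V) ^ 2)
      = A.ncard - (A.ncard:ℝ)^2 / Fintype.card V := by
  have key : ∀ v, ((if v ∈ A then (1:ℝ) else 0) - A.ncard / Fintype.card V) ^ 2
      = (1 - 2*((A.ncard:ℝ)/Fintype.card V)) * (if v ∈ A then (1:ℝ) else 0)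
        + ((A.ncard:ℝ)/Fintype.card V)^2 := by
    intro v; by_cases h : v ∈ A <;> simp [h] <;> ring
  simp only [key, Finset.sum_add_distrib, ← Finset.mul_sum, ind_sum, Finset.sum_const,
    Finset.card_univ, nsmul_eq_mul]
  have hn' : (Fintype.card V : ℝ) ≠ 0 := by positivity
  field_simp
  ring

lemma bil_centered [Fintype V] (G : SimpleGraph V) {d : ℕ} (hreg : ∀ v, degN G v = d)
    (A B : Set V) (hn : 0 < Fintype.card V) :
    bil G (fun v => (if v ∈ A then (1:ℝ) else 0) - A.ncard / Fintype.card V)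
          (fun v => (if v ∈ B then (1:ℝ) else 0) - B.ncard / Fintype.card V)
      = (∑ u, ∑ v, if G.Adj u v ∧ u ∈ A ∧ v ∈ B then (1:ℝ) else 0)
          - d * A.ncard * B.ncard / Fintype.card V := by
  set n : ℝ := (Fintype.card V : ℝ) with hnn
  set ca : ℝ := (A.ncard : ℝ) / n with hca
  set cb : ℝ := (B.ncard : ℝ) / n with hcb
  have key : ∀ u v : V,
      (if G.Adj u v then ((if u ∈ A then (1:ℝ) else 0) - ca) * ((if v ∈ B then (1:ℝ) else 0) - cb) else 0)
      = (if G.Adj u v ∧ u ∈ A ∧ v ∈ B then (1:ℝ) else 0)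
        - cb * ((if u ∈ A then (1:ℝ) else 0) * (if G.Adj u v then (1:ℝ) else 0))
        - ca * ((if G.Adj u v then (1:ℝ) else 0) * (if v ∈ B then (1:ℝ) else 0))
        + ca * cb * (if G.Adj u v then (1:ℝ) else 0) := by
    intro u v
    by_cases h1 : G.Adj u v <;> by_cases h2 : u ∈ A <;> by_cases h3 : v ∈ B <;>
      simp [h1, h2, h3] <;> ring
  rw [bil]
  simp only [key]
  simp only [Finset.sum_sub_distrib, Finset.sum_add_distrib, ← Finset.mul_sum]
  have t2 : ∀ u : V, (∑ v, (if u ∈ A then (1:ℝ) else 0) * (if G.Adj u v then (1:ℝ) else 0))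
      = (if u ∈ A then (1:ℝ) else 0) * d := by
    intro u
    rw [← Finset.mul_sum, rowsum_eq, hreg]
  have t3 : (∑ u, ∑ v, (if G.Adj u v then (1:ℝ) else 0) * (if v ∈ B then (1:ℝ) else 0))
      = (B.ncard : ℝ) * d := by
    rw [Finset.sum_comm]
    have : ∀ v : V, (∑ u, (if G.Adj u v then (1:ℝ) else 0) * (if v ∈ B then (1:ℝ) else 0))
        = (if v ∈ B then (1:ℝ) else 0) * d := by
      intro v
      rw [← Finset.sum_mul, colsum_eq, hreg, mul_comm]
    simp only [this, ← Finset.sum_mul, ind_sum]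
  have t4 : (∑ u : V, ∑ v, (if G.Adj u v then (1:ℝ) else 0)) = n * d := by
    have : ∀ u : V, (∑ v, if G.Adj u v then (1:ℝ) else 0) = (d:ℝ) := by
      intro u; rw [rowsum_eq, hreg]
    simp only [this, Finset.sum_const, Finset.card_univ, nsmul_eq_mul, hnn]
  have t2' : (∑ u, (if u ∈ A then (1:ℝ) else 0) * (d:ℝ)) = (A.ncard:ℝ) * d := by
    rw [← Finset.sum_mul, ind_sum]
  have trow : ∀ u : V, (∑ v, if G.Adj u v then (1:ℝ) else 0) = (d:ℝ) := fun u => by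
    rw [rowsum_eq, hreg]
  simp only [trow, t3, Finset.sum_const, Finset.card_univ, nsmul_eq_mul, t2']
  have hn' : n ≠ 0 := by rw [hnn]; positivity
  rw [hca, hcb]
  field_simp
  ring

lemma mixing [Fintype V] (G : SimpleGraph V) {d : ℕ} {lam : ℝ}
    (hreg : ∀ v, degN G v = d)
    (hG : ∀ x : V → ℝ, (∑ v, x v) = 0 → |quadForm G x| ≤ lam * ∑ v, x v ^ 2)
    (A B : Set V) (hn : 0 < Fintype.card V) :
    |(∑ u, ∑ v, if G.Adj u v ∧ u ∈ A ∧ v ∈ B then (1:ℝ) else 0)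
        - d * A.ncard * B.ncard / Fintype.card V|
      ≤ lam * Real.sqrt (A.ncard - (A.ncard:ℝ)^2 / Fintype.card V)
          * Real.sqrt (B.ncard - (B.ncard:ℝ)^2 / Fintype.card V) := by
  have h := bil_cs G hG
    (fun v => (if v ∈ A then (1:ℝ) else 0) - A.ncard / Fintype.card V)
    (fun v => (if v ∈ B then (1:ℝ) else 0) - B.ncard / Fintype.card V)
    (ind_centered_sum A) (ind_centered_sum B)
  rw [bil_centered G hreg A B hn] at h
  rwa [ind_centered_sq A hn, ind_centered_sq B hn] at h

lemma degN_le_maxDeg [Fintype V] (H : SimpleGraph V) (v : V) : degN H v ≤ maxDeg H :=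
  le_csSup (Set.finite_range _).bddAbove (Set.mem_range_self v)

lemma degN_split [Fintype V] (G H : SimpleGraph V) (v : V) :
    degN G v ≤ degN (G \ H) v + degN H v := by
  rw [degN, degN, degN]
  have hsub : G.neighborSet v ⊆ (G \ H).neighborSet v ∪ H.neighborSet v := by
    intro u hu
    rw [SimpleGraph.mem_neighborSet] at hu
    by_cases h : H.Adj v u
    · exact Or.inr h
    · exact Or.inl ⟨hu, h⟩
  calc (G.neighborSet v).ncard
      ≤ ((G \ H).neighborSet v ∪ H.neighborSet v).ncard :=
        Set.ncard_le_ncard hsub (Set.toFinite _)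
    _ ≤ ((G \ H).neighborSet v).ncard + (H.neighborSet v).ncard := Set.ncard_union_le _ _

noncomputable def e2R [Fintype V] (K : SimpleGraph V) (P Q : Set V) : ℝ :=
  ∑ u, ∑ v, if K.Adj u v ∧ u ∈ P ∧ v ∈ Q then (1:ℝ) else 0

lemma e2R_symm [Fintype V] (K : SimpleGraph V) (P Q : Set V) : e2R K P Q = e2R K Q P := by
  rw [e2R, e2R, Finset.sum_comm]
  refine Finset.sum_congr rfl fun u _ => Finset.sum_congr rfl fun v _ => ?_
  refine if_congr ?_ rfl rfl
  constructor
  · rintro ⟨h, h1, h2⟩; exact ⟨h.symm, h2, h1⟩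
  · rintro ⟨h, h1, h2⟩; exact ⟨h.symm, h2, h1⟩

lemma e2R_nonneg [Fintype V] (K : SimpleGraph V) (P Q : Set V) : 0 ≤ e2R K P Q :=
  Finset.sum_nonneg fun u _ => Finset.sum_nonneg fun v _ => by positivity

lemma e2R_mono [Fintype V] {K K' : SimpleGraph V} {P P' Q Q' : Set V}
    (hK : K ≤ K') (hP : P ⊆ P') (hQ : Q ⊆ Q') : e2R K P Q ≤ e2R K' P' Q' := by
  refine Finset.sum_le_sum fun u _ => Finset.sum_le_sum fun v _ => ?_
  by_cases h : K.Adj u v ∧ u ∈ P ∧ v ∈ Q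
  · rw [if_pos h, if_pos ⟨hK h.1, hP h.2.1, hQ h.2.2⟩]
  · rw [if_neg h]
    positivity

lemma ite_sum_ite [Fintype V] (P : Set V) (c : ℝ) :
    (∑ u, if u ∈ P then c else 0) = P.ncard * c := by
  have : ∀ u : V, (if u ∈ P then c else 0) = (if u ∈ P then (1:ℝ) else 0) * c := by
    intro u; split <;> ring
  rw [Finset.sum_congr rfl fun u _ => this u, ← Finset.sum_mul, ind_sum]

lemma final_arith (d α β σ n ε lam Δ c : ℝ)
    (hd100 : 100 ≤ d) (hε : 0 < ε) (hlam0 : 0 ≤ lam) (hΔ : Δ ≤ (d - lam)/2 - ε)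
    (hlamd : lam ≤ d - 2*ε)
    (hα1 : 1 ≤ α) (hβ1 : 1 ≤ β) (hσ0 : 0 ≤ σ) (hcard : α + β + σ = n)
    (hαβr : α ≤ β) (hσd : σ < d) (hεα : d^2 < ε*α)
    (hc0 : 0 ≤ c) (hcd : 2*d*c = ε)
    (hkey2 : d*α*β - lam * (α*(β+σ/2)*(1+c)) ≤ Δ * α * n) : False := by
  have hd0 : (0:ℝ) < d := by linarith
  have hα0 : (0:ℝ) < α := by linarith
  have hn0 : (0:ℝ) < n := by linarith
  have hld : lam ≤ d := by linarith
  have hS1 : (0:ℝ) ≤ (d - lam) * (β - α) := mul_nonneg (by linarith) (by linarith)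
  have hS2 : lam * c * (β+σ/2) ≤ (ε/2) * (β+σ/2) := by
    have h1 : lam * c ≤ d * c := mul_le_mul_of_nonneg_right hld hc0
    have h2 : d * c = ε/2 := by linarith
    have h3 : (0:ℝ) ≤ β + σ/2 := by linarith
    nlinarith
  have hS3 : d*σ ≤ d*d := by nlinarith
  have hS4 : (ε/2)*(β+σ/2) ≤ (ε/2)*n := by
    have : β + σ/2 ≤ n := by linarith
    nlinarith
  have hS5 : ε*(2*α) ≤ ε*n := by
    have : 2*α ≤ n := by linarith
    nlinarith
  obtain ⟨Sc, hScdef⟩ : ∃ r : ℝ,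
      r = d*β - lam*((β+σ/2)*(1+c)) - ((d-lam)/2 - ε)*n := ⟨_, rfl⟩
  have hid : Sc = (d-lam)*(β-α)/2 - d*σ/2 + ε*n - lam*c*(β+σ/2) := by
    rw [hScdef]
    have hn' : n = α + β + σ := by linarith
    rw [hn']
    ring
  have hSpos : 0 < Sc := by
    rw [hid]
    linarith [hS1, hS2, hS3, hS4, hS5, hεα, sq_nonneg d]
  have hid2 : d*α*β - lam*(α*(β+σ/2)*(1+c)) - ((d-lam)/2 - ε)*α*n = α * Sc := by
    rw [hScdef]; ring
  have hfin1 : ((d-lam)/2 - ε)*α*n < d*α*β - lam*(α*(β+σ/2)*(1+c)) := by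
    have := mul_pos hα0 hSpos
    linarith [hid2]
  have hfin2 : Δ * α * n ≤ ((d-lam)/2 - ε)*α*n := by
    have h1 : (0:ℝ) ≤ α * n := by positivity
    have := mul_le_mul_of_nonneg_right hΔ h1
    linarith [this]
  linarith [hkey2, hfin1, hfin2]

set_option maxHeartbeats 4000000 in
lemma large_contra [Fintype V] (ε lam : ℝ) (d : ℕ) (G H : SimpleGraph V) (A B S : Set V)
    (hε : 0 < ε) (hd : 100 ≤ d)
    (hreg : ∀ v, degN G v = d)
    (hG : ∀ x : V → ℝ, (∑ v, x v) = 0 → |quadForm G x| ≤ lam * ∑ v, x v ^ 2)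
    (hΔ : (maxDeg H : ℝ) ≤ ((d : ℝ) - lam) / 2 - ε)
    (hlam0 : 0 ≤ lam)
    (hAne : A.Nonempty) (hBne : B.Nonempty)
    (hcardsum : A.ncard + B.ncard + S.ncard = Fintype.card V)
    (hnoedge : ∀ a ∈ A, ∀ b ∈ B, ¬ (G \ H).Adj a b)
    (hS : (S.ncard : ℝ) < (d : ℝ) - (maxDeg H : ℝ))
    (hab : A.ncard ≤ B.ncard)
    (hbig : (d:ℝ)^2/ε < (A.ncard : ℝ)) : False := by
  classical
  set Δ : ℝ := (maxDeg H : ℝ) with hΔdef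
  have hΔ0 : 0 ≤ Δ := Nat.cast_nonneg _
  have hεd2 : ε ≤ ((d:ℝ) - lam) / 2 := by linarith
  have hlamd : lam ≤ (d:ℝ) - 2*ε := by linarith
  have hd0 : (0:ℝ) < d := by positivity
  have hd100 : (100:ℝ) ≤ (d:ℝ) := by exact_mod_cast hd
  set α : ℝ := (A.ncard : ℝ) with hα
  set β : ℝ := (B.ncard : ℝ) with hβ
  set σ : ℝ := (S.ncard : ℝ) with hσ
  have hα1 : (1:ℝ) ≤ α := by
    rw [hα]
    have := (Set.ncard_pos (Set.toFinite A)).2 hAne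
    exact_mod_cast this
  have hβ1 : (1:ℝ) ≤ β := by
    rw [hβ]
    have := (Set.ncard_pos (Set.toFinite B)).2 hBne
    exact_mod_cast this
  have hσ0 : (0:ℝ) ≤ σ := Nat.cast_nonneg _
  have hnpos : 0 < Fintype.card V := Fintype.card_pos_iff.2 ⟨hAne.some⟩
  set n : ℝ := (Fintype.card V : ℝ) with hn
  have hcard : α + β + σ = n := by
    rw [hα, hβ, hσ, hn]
    exact_mod_cast hcardsum
  have hn0 : (0:ℝ) < n := by rw [hn]; exact_mod_cast hnpos
  have hσd : σ < (d:ℝ) := by linarith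
  have hεα : (d:ℝ)^2 < ε * α := by
    rw [div_lt_iff₀ hε] at hbig; linarith
  have hαβr : α ≤ β := by rw [hα, hβ]; exact_mod_cast hab
  have hα0 : (0:ℝ) < α := by linarith
  -- upper bound on ordered edges between A and B via H
  obtain ⟨E2, hE2def⟩ : ∃ r : ℝ,
      r = ∑ u, ∑ v, if G.Adj u v ∧ u ∈ A ∧ v ∈ B then (1:ℝ) else 0 := ⟨_, rfl⟩
  have hE2upper : E2 ≤ Δ * α := by
    rw [hE2def]
    have step1 : (∑ u, ∑ v, if G.Adj u v ∧ u ∈ A ∧ v ∈ B then (1:ℝ) else 0)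
        ≤ ∑ u, (if u ∈ A then ((degN H u : ℝ)) else 0) := by
      refine Finset.sum_le_sum fun u _ => ?_
      by_cases h1 : u ∈ A
      · rw [if_pos h1, ← rowsum_eq]
        refine Finset.sum_le_sum fun v _ => ?_
        by_cases h2 : G.Adj u v ∧ u ∈ A ∧ v ∈ B
        · rw [if_pos h2]
          have hHadj : H.Adj u v := by
            by_contra hH'
            exact hnoedge u h2.2.1 v h2.2.2 ⟨h2.1, hH'⟩
          rw [if_pos hHadj]
        · rw [if_neg h2]
          split <;> norm_num
      · rw [if_neg h1]
        refine le_of_eq (Finset.sum_eq_zero fun v _ => ?_)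
        rw [if_neg (fun h => h1 h.2.1)]
    have step2 : (∑ u, (if u ∈ A then ((degN H u : ℝ)) else 0))
        ≤ ∑ u, (if u ∈ A then Δ else 0) := by
      refine Finset.sum_le_sum fun u _ => ?_
      by_cases h1 : u ∈ A
      · rw [if_pos h1, if_pos h1, hΔdef]
        exact_mod_cast degN_le_maxDeg H u
      · rw [if_neg h1, if_neg h1]
    have step3 : (∑ u, (if u ∈ A then Δ else 0)) = α * Δ := by
      rw [ite_sum_ite, hα]
    linarith [step1, step2, le_of_eq step3]
  have hmix := mixing G hreg hG A B hnpos
  rw [← hE2def, ← hα, ← hβ, ← hn] at hmix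
  have hlow : (d:ℝ)*α*β/n - lam * Real.sqrt (α - α^2/n) * Real.sqrt (β - β^2/n) ≤ E2 := by
    have h' := (abs_le.1 hmix).1
    linarith
  -- bound the sqrt term
  obtain ⟨c, hcdef⟩ : ∃ c : ℝ, c = ε/(2*(d:ℝ)) := ⟨_, rfl⟩
  have hc0 : 0 ≤ c := by rw [hcdef]; positivity
  have hcd : 2*(d:ℝ)*c = ε := by rw [hcdef]; field_simp
  have hσαc : σ ≤ 2*α*c := by
    have h1 : σ * (d:ℝ) < (d:ℝ) * (d:ℝ) := by nlinarith
    have h2 : σ * (2*(d:ℝ)*c) < (2*(d:ℝ)*c) * α := by rw [hcd]; nlinarith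
    nlinarith
  have hP1 : α - α^2/n = α*(β+σ)/n := by
    have hbs : β + σ = n - α := by linarith
    rw [hbs]
    field_simp
  have hP2 : β - β^2/n = β*(α+σ)/n := by
    have has : α + σ = n - β := by linarith
    rw [has]
    field_simp
  have hT0 : 0 ≤ α*(β+σ/2)*(1+c)/n := by
    have : (0:ℝ) ≤ β + σ/2 := by linarith
    have : (0:ℝ) ≤ α*(β+σ/2) := by nlinarith
    have : (0:ℝ) ≤ α*(β+σ/2)*(1+c) := by nlinarith
    positivity
  have hsq : Real.sqrt (α - α^2/n) * Real.sqrt (β - β^2/n) ≤ α*(β+σ/2)*(1+c)/n := by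
    rw [hP1, hP2, ← Real.sqrt_mul (by positivity)]
    have hcmp : (α*(β+σ)/n) * (β*(α+σ)/n) ≤ (α*(β+σ/2)*(1+c)/n)^2 := by
      have h1 : β*(β+σ) ≤ (β+σ/2)^2 := by nlinarith [sq_nonneg σ]
      have h2 : α*(α+σ) ≤ α^2*(1+c)^2 := by
        nlinarith [mul_nonneg hα0.le (sub_nonneg.2 hσαc), sq_nonneg (α*c)]
      have hr0 : (0:ℝ) ≤ α*(α+σ) := mul_nonneg (by linarith) (by linarith)
      have hprod := mul_le_mul h1 h2 hr0 (sq_nonneg (β+σ/2))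
      have hexpand : (α*(β+σ)/n) * (β*(α+σ)/n) = (β*(β+σ)) * (α*(α+σ)) / n^2 := by
        field_simp
      have hexpand2 : (α*(β+σ/2)*(1+c)/n)^2 = ((β+σ/2)^2 * (α^2*(1+c)^2)) / n^2 := by
        field_simp
      rw [hexpand, hexpand2]
      apply div_le_div_of_nonneg_right ?_ (by positivity)
      · exact hprod
    calc Real.sqrt ((α*(β+σ)/n) * (β*(α+σ)/n)) ≤ Real.sqrt ((α*(β+σ/2)*(1+c)/n)^2) :=
          Real.sqrt_le_sqrt hcmp
      _ = α*(β+σ/2)*(1+c)/n := by rw [Real.sqrt_sq hT0]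
  -- combine
  have hkey : (d:ℝ)*α*β/n - lam * (α*(β+σ/2)*(1+c)/n) ≤ Δ * α := by
    have h1 : lam * (Real.sqrt (α - α^2/n) * Real.sqrt (β - β^2/n))
        ≤ lam * (α*(β+σ/2)*(1+c)/n) := mul_le_mul_of_nonneg_left hsq hlam0
    nlinarith [hlow, hE2upper]
  have hkey2 : (d:ℝ)*α*β - lam * (α*(β+σ/2)*(1+c)) ≤ Δ * α * n := by
    have e1 : ((d:ℝ)*α*β - lam*(α*(β+σ/2)*(1+c)))/n
        = (d:ℝ)*α*β/n - lam*(α*(β+σ/2)*(1+c)/n) := by ring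
    have h2 : ((d:ℝ)*α*β - lam*(α*(β+σ/2)*(1+c)))/n ≤ Δ * α := by rw [e1]; exact hkey
    rw [div_le_iff₀ hn0] at h2
    linarith
  exact final_arith (d:ℝ) α β σ n ε lam Δ c hd100 hε hlam0 hΔ hlamd hα1 hβ1 hσ0 hcard
    hαβr hσd hεα hc0 hcd hkey2

set_option maxHeartbeats 2000000 in
lemma main_contra [Fintype V] (ε lam : ℝ) (d : ℕ) (G H : SimpleGraph V) (A B S : Set V)
    (hε : 0 < ε) (hd : 100 ≤ d) (hH : H ≤ G)
    (hreg : ∀ v, degN G v = d)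
    (hG : ∀ x : V → ℝ, (∑ v, x v) = 0 → |quadForm G x| ≤ lam * ∑ v, x v ^ 2)
    (hdens : ∀ U : Set V, (U.ncard : ℝ) ≤ (d : ℝ) + (d : ℝ) ^ 2 / ε →
      (edgesWithin G U : ℝ) ≤ (U.ncard : ℝ))
    (hΔ : (maxDeg H : ℝ) ≤ ((d : ℝ) - lam) / 2 - ε)
    (hlam0 : 0 ≤ lam)
    (hAne : A.Nonempty) (hBne : B.Nonempty)
    (hABd : Disjoint A B) (hASd : Disjoint A S) (hBSd : Disjoint B S)
    (hcover : A ∪ B ∪ S = Set.univ)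
    (hnoedge : ∀ a ∈ A, ∀ b ∈ B, ¬ (G \ H).Adj a b)
    (hS : (S.ncard : ℝ) < (d : ℝ) - (maxDeg H : ℝ))
    (hab : A.ncard ≤ B.ncard) : False := by
  classical
  set Δ : ℝ := (maxDeg H : ℝ) with hΔdef
  have hΔ0 : 0 ≤ Δ := Nat.cast_nonneg _
  have hεd2 : ε ≤ ((d:ℝ) - lam) / 2 := by linarith
  have hlamd : lam ≤ (d:ℝ) - 2*ε := by linarith
  have hΔd2 : Δ ≤ (d:ℝ)/2 - ε := by linarith
  have hdΔ : (d:ℝ)/2 + ε ≤ (d:ℝ) - Δ := by linarith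
  have hd0 : (0:ℝ) < d := by positivity
  have hd100 : (100:ℝ) ≤ (d:ℝ) := by exact_mod_cast hd
  -- cardinalities
  set α : ℝ := (A.ncard : ℝ) with hα
  set β : ℝ := (B.ncard : ℝ) with hβ
  set σ : ℝ := (S.ncard : ℝ) with hσ
  have hα1 : (1:ℝ) ≤ α := by
    rw [hα]
    have := (Set.ncard_pos (Set.toFinite A)).2 hAne
    exact_mod_cast this
  have hβ1 : (1:ℝ) ≤ β := by
    rw [hβ]
    have := (Set.ncard_pos (Set.toFinite B)).2 hBne
    exact_mod_cast this
  have hσ0 : (0:ℝ) ≤ σ := Nat.cast_nonneg _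
  have hcard : α + β + σ = (Fintype.card V : ℝ) := by
    rw [hα, hβ, hσ, ← Nat.cast_add, ← Nat.cast_add]
    norm_cast
    rw [← Set.ncard_union_eq hABd (Set.toFinite A) (Set.toFinite B)]
    rw [← Set.ncard_union_eq (by rw [Set.disjoint_union_left]; exact ⟨hASd, hBSd⟩)
      (Set.toFinite _) (Set.toFinite S)]
    rw [hcover, Set.ncard_univ, Nat.card_eq_fintype_card]
  have hnpos : 0 < Fintype.card V := Fintype.card_pos_iff.2 ⟨hAne.some⟩
  set n : ℝ := (Fintype.card V : ℝ) with hn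
  have hn0 : (0:ℝ) < n := by rw [hn]; exact_mod_cast hnpos
  -- min degree of G \ H
  have hmind : ∀ v : V, (d:ℝ) - Δ ≤ (degN (G \ H) v : ℝ) := by
    intro v
    have h1 := degN_split G H v
    have h2 := degN_le_maxDeg H v
    have := hreg v
    have : (d:ℝ) ≤ (degN (G \ H) v : ℝ) + (degN H v : ℝ) := by
      rw [← this]; exact_mod_cast h1
    have h3 : (degN H v : ℝ) ≤ Δ := by rw [hΔdef]; exact_mod_cast h2
    linarith
  have hσd : σ < (d:ℝ) := by linarith
  -- main case split
  by_cases hbig : α ≤ (d:ℝ)^2 / ε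
  · -- SMALL CASE
    rcases Set.eq_singleton_or_nontrivial (hAne.some_mem) with hA1 | hA2
    · -- A = {v}
      set v := hAne.some
      have hNsub : (G \ H).neighborSet v ⊆ S := by
        intro w hw
        rw [SimpleGraph.mem_neighborSet] at hw
        have hwmem : w ∈ A ∪ B ∪ S := by rw [hcover]; trivial
        rcases hwmem with (hwA | hwB) | hwS
        · exfalso; rw [hA1] at hwA; exact (G \ H).irrefl (hwA ▸ hw)
        · exact absurd hw (hnoedge v hAne.some_mem w hwB)
        · exact hwS
      have h1 : degN (G \ H) v ≤ S.ncard := Set.ncard_le_ncard hNsub (Set.toFinite S)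
      have h2 := hmind v
      have : (degN (G \ H) v : ℝ) ≤ σ := by rw [hσ]; exact_mod_cast h1
      linarith
    · -- |A| ≥ 2
      have hα2 : (2:ℝ) ≤ α := by
        rw [hα]
        have : 1 < A.ncard := (Set.one_lt_ncard (Set.toFinite A)).2 hA2
        exact_mod_cast this
      set U : Set V := A ∪ S with hU
      have hUcard : ((U.ncard : ℝ)) ≤ α + σ := by
        rw [hU, hα, hσ, ← Nat.cast_add]; exact_mod_cast Set.ncard_union_le A S
      have hUsize : ((U.ncard : ℝ)) ≤ (d:ℝ) + (d:ℝ)^2/ε := by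
        have : σ ≤ (d:ℝ) := le_of_lt hσd
        linarith
      have hdensU := hdens U hUsize
      have hdensA := hdens A (by nlinarith)
      -- D := sum over A of degrees in G \ H
      obtain ⟨D, hDdef⟩ : ∃ r : ℝ, r = ∑ u, (if u ∈ A then ((degN (G \ H) u : ℝ)) else 0) :=
        ⟨_, rfl⟩
      have hD1 : α * ((d:ℝ) - Δ) ≤ D := by
        rw [hDdef]
        have : (∑ u, if u ∈ A then ((d:ℝ) - Δ) else 0) = α * ((d:ℝ) - Δ) := by
          rw [ite_sum_ite]
        rw [← this]
        refine Finset.sum_le_sum fun u _ => ?_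
        by_cases h : u ∈ A
        · rw [if_pos h, if_pos h]; exact hmind u
        · rw [if_neg h, if_neg h]
      have hD2 : D = e2R (G \ H) A A + e2R (G \ H) A S := by
        rw [hDdef, e2R, e2R, ← Finset.sum_add_distrib]
        refine Finset.sum_congr rfl fun u _ => ?_
        rw [← Finset.sum_add_distrib]
        by_cases h1 : u ∈ A
        · rw [if_pos h1, ← rowsum_eq]
          refine Finset.sum_congr rfl fun v _ => ?_
          by_cases h2 : (G \ H).Adj u v
          · have hv : v ∈ A ∪ B ∪ S := by rw [hcover]; trivial
            have hvnB : v ∉ B := fun hvB => hnoedge u h1 v hvB h2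
            rcases hv with (hvA | hvB) | hvS
            · rw [if_pos h2, if_pos ⟨h2, h1, hvA⟩,
                if_neg (fun h => (hASd.ne_of_mem hvA h.2.2) rfl)]
              norm_num
            · exact absurd hvB hvnB
            · rw [if_pos h2, if_neg (fun h => (hASd.ne_of_mem h.2.2 hvS) rfl),
                if_pos ⟨h2, h1, hvS⟩]
              norm_num
          · rw [if_neg h2, if_neg (fun h => h2 h.1), if_neg (fun h => h2 h.1)]
            norm_num
        · rw [if_neg h1]
          symm
          refine Finset.sum_eq_zero fun v _ => ?_
          rw [if_neg (fun h => h1 h.2.1), if_neg (fun h => h1 h.2.1)]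
          norm_num
      have hsum3 : e2R (G \ H) A A + e2R (G \ H) A S + e2R (G \ H) S A
          ≤ 2 * (edgesWithin G U : ℝ) := by
        rw [← e2_handshake]
        rw [e2R, e2R, e2R, ← Finset.sum_add_distrib, ← Finset.sum_add_distrib]
        refine Finset.sum_le_sum fun u _ => ?_
        rw [← Finset.sum_add_distrib, ← Finset.sum_add_distrib]
        refine Finset.sum_le_sum fun v _ => ?_
        have hGH : ∀ x y, (G \ H).Adj x y → G.Adj x y := fun x y h => h.1
        by_cases h1 : (G \ H).Adj u v ∧ u ∈ A ∧ v ∈ A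
        · rw [if_pos h1, if_neg (fun h => (hASd.ne_of_mem h1.2.2 h.2.2) rfl),
            if_neg (fun h => (hASd.ne_of_mem h1.2.1 h.2.1) rfl),
            if_pos ⟨hGH _ _ h1.1, Or.inl h1.2.1, Or.inl h1.2.2⟩]
          norm_num
        · rw [if_neg h1]
          by_cases h2 : (G \ H).Adj u v ∧ u ∈ A ∧ v ∈ S
          · rw [if_pos h2, if_neg (fun h => (hASd.ne_of_mem h2.2.1 h.2.1) rfl),
              if_pos ⟨hGH _ _ h2.1, Or.inl h2.2.1, Or.inr h2.2.2⟩]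
            norm_num
          · rw [if_neg h2]
            by_cases h3 : (G \ H).Adj u v ∧ u ∈ S ∧ v ∈ A
            · rw [if_pos h3, if_pos ⟨hGH _ _ h3.1, Or.inr h3.2.1, Or.inl h3.2.2⟩]
              norm_num
            · rw [if_neg h3]
              by_cases h4 : G.Adj u v ∧ u ∈ U ∧ v ∈ U
              · rw [if_pos h4]; norm_num
              · rw [if_neg h4]; norm_num
      have hAAbound : e2R (G \ H) A A ≤ 2 * α := by
        calc e2R (G \ H) A A ≤ e2R G A A :=
              e2R_mono sdiff_le (subset_refl A) (subset_refl A)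
          _ = 2 * (edgesWithin G A : ℝ) := e2_handshake G A
          _ ≤ 2 * α := by linarith
      have hsymm : e2R (G \ H) S A = e2R (G \ H) A S := e2R_symm _ S A
      -- combine
      have hchain : α * ((d:ℝ) - Δ) ≤ 2*α + σ := by
        have h1 : 2 * D - e2R (G \ H) A A ≤ 2 * (edgesWithin G U : ℝ) := by
          rw [hD2]; rw [hsymm] at hsum3; linarith
        have h2 : 2 * (edgesWithin G U : ℝ) ≤ 2 * (α + σ) := by linarith
        linarith
      have hfinal : 0 ≤ (α - 2) * (((d:ℝ) - Δ) - 4) :=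
        mul_nonneg (by linarith) (by linarith)
      have hexp : α * ((d:ℝ) - Δ) - 4*α - 2*((d:ℝ) - Δ) + 8 = (α - 2) * (((d:ℝ) - Δ) - 4) := by
        ring
      linarith [hfinal, hexp, hchain, hS]
  · -- LARGE CASE
    push_neg at hbig
    have hcardsum : A.ncard + B.ncard + S.ncard = Fintype.card V := by
      have h' : α + β + σ = n := hcard
      rw [hα, hβ, hσ, hn] at h'
      exact_mod_cast h'
    have hbig' : (d:ℝ)^2/ε < (A.ncard : ℝ) := by rw [← hα]; exact hbig
    exact large_contra ε lam d G H A B S hε hd hreg hG hΔ hlam0 hAne hBne hcardsum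
      hnoedge hS hab hbig'

lemma lam_nonneg [Fintype V] (G : SimpleGraph V) {lam : ℝ}
    (hG : ∀ x : V → ℝ, (∑ v, x v) = 0 → |quadForm G x| ≤ lam * ∑ v, x v ^ 2)
    (hcard : 2 ≤ Fintype.card V) : 0 ≤ lam := by
  obtain ⟨u, w, huw⟩ := Fintype.exists_pair_of_one_lt_card (by omega : 1 < Fintype.card V)
  set x : V → ℝ := fun v => (if v = u then (1:ℝ) else 0) - (if v = w then (1:ℝ) else 0) with hx
  have hsum : ∑ v, x v = 0 := by
    rw [hx]
    simp only [Finset.sum_sub_distrib]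
    rw [Finset.sum_ite_eq' Finset.univ u (fun _ => (1:ℝ)),
      Finset.sum_ite_eq' Finset.univ w (fun _ => (1:ℝ))]
    simp
  have hsq : ∑ v, x v ^ 2 = 2 := by
    have key : ∀ v, x v ^ 2 = (if v = u then (1:ℝ) else 0) + (if v = w then (1:ℝ) else 0) := by
      intro v
      rw [hx]
      rcases eq_or_ne v u with h1 | h1 <;> rcases eq_or_ne v w with h2 | h2
      · exact absurd (h1.symm.trans h2) huw
      · simp [h1, h2, huw]
      · simp [h1, h2, huw.symm]
      · simp [h1, h2]
    simp only [key, Finset.sum_add_distrib]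
    rw [Finset.sum_ite_eq' Finset.univ u (fun _ => (1:ℝ)),
      Finset.sum_ite_eq' Finset.univ w (fun _ => (1:ℝ))]
    norm_num
  have h := hG x hsum
  rw [hsq] at h
  have := abs_nonneg (quadForm G x)
  linarith

/-- there is d₀ > 0 so that for every ε > 0 and d₀ ≤ d ≤ n-1, every
(n,d,λ)-graph in which every U with |U| ≤ d + d²/ε spans at most |U| edges is such
that removing any H with Δ(H) ≤ (d-λ)/2 - ε leaves a (d - Δ(H))-vertex-connected graph. -/
theorem stmt4 :
    ∃ d₀ : ℕ, 0 < d₀ ∧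
      ∀ (V : Type) [Fintype V], ∀ (ε lam : ℝ) (d : ℕ) (G : SimpleGraph V),
        0 < ε → d₀ ≤ d → d ≤ Fintype.card V - 1 → IsNDL G d lam →
        (∀ U : Set V, (U.ncard : ℝ) ≤ (d : ℝ) + (d : ℝ) ^ 2 / ε →
          (edgesWithin G U : ℝ) ≤ (U.ncard : ℝ)) →
        ∀ H ≤ G, (maxDeg H : ℝ) ≤ ((d : ℝ) - lam) / 2 - ε →
          VertConnK (G \ H) (d - maxDeg H) := by
  refine ⟨100, by norm_num, ?_⟩
  intro V _ ε lam d G hε hd hdn hNDL hdens H hHG hmax S hScard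
  classical
  by_contra hcon
  -- basic numbers
  have hn1 : 1 ≤ Fintype.card V := by
    by_contra h
    have h0 : Fintype.card V = 0 := by omega
    rw [h0] at hdn
    omega
  have hnd : d + 1 ≤ Fintype.card V := by omega
  have hcard2 : 2 ≤ Fintype.card V := by omega
  have hlam0 : 0 ≤ lam := lam_nonneg G hNDL.2 hcard2
  -- Δ bounds
  have hΔd : maxDeg H < d := by
    have h0 : (0:ℝ) ≤ (maxDeg H : ℝ) := Nat.cast_nonneg _
    have : (maxDeg H : ℝ) < (d:ℝ) := by
      have hd100 : (100:ℝ) ≤ (d:ℝ) := by exact_mod_cast hd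
      nlinarith [hmax, hlam0, hε]
    exact_mod_cast this
  have hSd : (S.card : ℝ) < (d:ℝ) - (maxDeg H : ℝ) := by
    have : S.card + maxDeg H < d := by omega
    have := (Nat.cast_lt (α := ℝ)).2 this
    push_cast at this
    linarith
  -- nonempty complement
  have hSne : ∃ v : V, v ∈ ((↑S : Set V)ᶜ) := by
    have hlt : S.card < Fintype.card V := by omega
    by_contra h
    push_neg at h
    have : (Finset.univ : Finset V) ⊆ S := by
      intro v _
      have := h v
      simp only [Set.mem_compl_iff, Finset.coe_sort_coe, not_not] at this
      exact_mod_cast this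
    have := Finset.card_le_card this
    rw [Finset.card_univ] at this
    omega
  obtain ⟨v0, hv0⟩ := hSne
  -- not connected gives two non-reachable vertices
  set s : Set V := (↑S : Set V)ᶜ with hs
  have hnprec : ¬ ((G \ H).induce s).Preconnected := by
    intro hp
    exact hcon ((SimpleGraph.connected_iff _).2 ⟨hp, ⟨⟨v0, hv0⟩⟩⟩)
  rw [SimpleGraph.Preconnected] at hnprec
  push_neg at hnprec
  obtain ⟨u0, w0, hnr⟩ := hnprec
  set A : Set V := {a : V | ∃ h : a ∈ s, ((G \ H).induce s).Reachable u0 ⟨a, h⟩} with hA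
  set B : Set V := {b : V | ∃ h : b ∈ s, ¬ ((G \ H).induce s).Reachable u0 ⟨b, h⟩} with hB
  have huA : (u0 : V) ∈ A := ⟨u0.2, by exact SimpleGraph.Reachable.refl u0⟩
  have hwB : (w0 : V) ∈ B := ⟨w0.2, by exact hnr⟩
  have hABd : Disjoint A B := by
    rw [Set.disjoint_left]
    rintro x ⟨hx, hr⟩ ⟨hy, hnr'⟩
    exact hnr' hr
  have hASd : Disjoint A (↑S : Set V) := by
    rw [Set.disjoint_left]
    rintro x ⟨hx, _⟩ hxS
    exact hx hxS
  have hBSd : Disjoint B (↑S : Set V) := by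
    rw [Set.disjoint_left]
    rintro x ⟨hx, _⟩ hxS
    exact hx hxS
  have hcover : A ∪ B ∪ (↑S : Set V) = Set.univ := by
    ext x
    simp only [Set.mem_union, Set.mem_univ, iff_true]
    by_cases hxS : x ∈ (↑S : Set V)
    · exact Or.inr hxS
    · left
      by_cases hr : ((G \ H).induce s).Reachable u0 ⟨x, hxS⟩
      · exact Or.inl ⟨hxS, hr⟩
      · exact Or.inr ⟨hxS, hr⟩
  have hnoedge : ∀ a ∈ A, ∀ b ∈ B, ¬ (G \ H).Adj a b := by
    rintro a ⟨ha, hra⟩ b ⟨hb, hnrb⟩ hadj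
    apply hnrb
    refine hra.trans (SimpleGraph.Adj.reachable ?_)
    exact hadj
  have hreg : ∀ v, degN G v = d := hNDL.1
  have hG2 := hNDL.2
  have hScard' : (((↑S : Set V)).ncard : ℝ) < (d:ℝ) - (maxDeg H : ℝ) := by
    rw [Set.ncard_coe_finset]
    exact hSd
  rcases le_total A.ncard B.ncard with hab | hab
  · exact main_contra ε lam d G H A B (↑S) hε hd hHG hreg hG2 hdens hmax hlam0
      ⟨_, huA⟩ ⟨_, hwB⟩ hABd hASd hBSd hcover hnoedge hScard' hab
  · exact main_contra ε lam d G H B A (↑S) hε hd hHG hreg hG2 hdens hmax hlam0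
      ⟨_, hwB⟩ ⟨_, huA⟩ hABd.symm hBSd hASd
      (by rw [Set.union_comm A B] at hcover; exact hcover)
      (fun b hb a ha hadj => hnoedge a ha b hb hadj.symm) hScard' hab
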